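/- Let R be a commutative unital ring, I an ideal of R, and M an I-coreduced R-module. Then the I-adic completion of the submodule IM is zero; that is, Λ_I(IM) = lim_k (IM)/(I^k · IM) = 0. In particular, for M flat and I-coreduced, Λ_I(F_I(M)) = 0. -/

import Mathlib

/-!
STATEMENT 4: Let `R` be a commutative unital ring, `I` an ideal of `R`, and `M` an
`I`-coreduced `R`-module. Then the `I`-adic completion of the submodule `IM` is zero:
`Λ_I(IM) = lim_k (IM)/(I^k · IM) = 0`. In particular, for `M` flat and `I`-coreduced,
`Λ_I(F_I(M)) = 0`, where `F_I(M) = lim_k (I^k ⊗_R M)`.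

We use Mathlib's `AdicCompletion I N = lim_k N/(I^k N)` for `Λ_I`, and express vanishing
as `Subsingleton`.
-/

universe u

open TensorProduct

/-- The inverse limit of an inverse system of `R`-modules indexed by `ℕ`
(with transition maps `f k l h : G l →ₗ[R] G k` for `h : k ≤ l`), realized as the submodule
of compatible families in the product. -/
def invLimit (R : Type u) [CommRing R] (G : ℕ → Type u) [∀ k, AddCommGroup (G k)]
    [∀ k, Module R (G k)] (f : ∀ k l : ℕ, k ≤ l → G l →ₗ[R] G k) :
    Submodule R (∀ k, G k) where
  carrier := { x | ∀ (k l : ℕ) (h : k ≤ l), f k l h (x l) = x k }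
  add_mem' := by
    intro a b ha hb k l h
    simp [ha k l h, hb k l h]
  zero_mem' := by
    intro k l h
    simp
  smul_mem' := by
    intro c a ha k l h
    simp [ha k l h]

/-- The inverse system `k ↦ I^(k+1) ⊗_R M` with transition maps induced by the inclusions
`I^(l+1) ⊆ I^(k+1)` for `k ≤ l`. -/
noncomputable def tensorPowDiagram (R : Type u) [CommRing R] (I : Ideal R) (M : Type u)
    [AddCommGroup M] [Module R M] :
    ∀ k l : ℕ, k ≤ l → (↥(I ^ (l + 1)) ⊗[R] M) →ₗ[R] (↥(I ^ (k + 1)) ⊗[R] M) :=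
  fun _ _ h =>
    LinearMap.rTensor M (Submodule.inclusion (Ideal.pow_le_pow_right (by omega)))

/-- `F_I(M) = lim_{k ≥ 1} (I^k ⊗_R M)`, the dual of the ideal transform. -/
noncomputable abbrev dualTransform (R : Type u) [CommRing R] (I : Ideal R) (M : Type u)
    [AddCommGroup M] [Module R M] : Submodule R (∀ k : ℕ, ↥(I ^ (k + 1)) ⊗[R] M) :=
  invLimit R (fun k : ℕ => ↥(I ^ (k + 1)) ⊗[R] M) (tensorPowDiagram R I M)

-- aux1: subsingleton of AdicCompletion from I • ⊤ = ⊤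
theorem aux_subsing (R : Type u) [CommRing R] (I : Ideal R) (N : Type u) [AddCommGroup N]
    [Module R N] (h : I • (⊤ : Submodule R N) = ⊤) : Subsingleton (AdicCompletion I N) := by
  have hpow : ∀ n : ℕ, (I ^ n • ⊤ : Submodule R N) = ⊤ := by
    intro n
    induction n with
    | zero => simp
    | succ n ih => rw [pow_succ, ← smul_eq_mul, Submodule.smul_assoc, h, ih]
  have : ∀ n : ℕ, Subsingleton (N ⧸ (I ^ n • ⊤ : Submodule R N)) := fun n =>
    (Submodule.Quotient.subsingleton_iff).2 (hpow n)
  exact ⟨fun a b => Subtype.ext (funext fun n => Subsingleton.elim _ _)⟩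

theorem stmt4 (R : Type u) [CommRing R] (I : Ideal R) (M : Type u) [AddCommGroup M]
    [Module R M] (hcor : I ^ 2 • (⊤ : Submodule R M) = I • (⊤ : Submodule R M)) :
    Subsingleton (AdicCompletion I ↥(I • (⊤ : Submodule R M))) ∧
      (Module.Flat R M → Subsingleton (AdicCompletion I ↥(dualTransform R I M))) := by
  -- key: I • (I • ⊤) = I • ⊤ on M
  have hI2 : I • (I • (⊤ : Submodule R M)) = I • (⊤ : Submodule R M) := by
    rw [← Submodule.smul_assoc, smul_eq_mul, ← pow_two, hcor]
  -- powers: I^(k+1) • ⊤ = I • ⊤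
  have hpow : ∀ k : ℕ, (I ^ (k + 1) • ⊤ : Submodule R M) = I • ⊤ := by
    intro k
    induction k with
    | zero => rw [pow_one]
    | succ k ih =>
      rw [pow_succ', ← smul_eq_mul, Submodule.smul_assoc, ih, hI2]
  constructor
  · -- part 1
    apply aux_subsing
    rw [eq_top_iff]
    intro x _
    rw [Submodule.mem_smul_top_iff]
    rw [hI2]; exact x.2
  · intro hflat
    set ψ : ∀ k : ℕ, (↥(I ^ (k + 1)) ⊗[R] M) →ₗ[R] M :=
      fun k => (TensorProduct.lid R M).toLinearMap ∘ₗ LinearMap.rTensor M (I ^ (k + 1)).subtype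
      with hψ
    have hinj : ∀ k, Function.Injective (ψ k) := fun k =>
      (TensorProduct.lid R M).injective.comp
        (Module.Flat.rTensor_preserves_injective_linearMap _ (I ^ (k + 1)).injective_subtype)
    have hcomp : ∀ (k l : ℕ) (h : k ≤ l) (x : ↥(I ^ (l + 1)) ⊗[R] M),
        ψ k (tensorPowDiagram R I M k l h x) = ψ l x := by
      intro k l h x
      simp only [hψ, LinearMap.coe_comp, Function.comp_apply, tensorPowDiagram]
      rw [← LinearMap.rTensor_comp_apply, Submodule.subtype_comp_inclusion]
    have hmem : ∀ (k : ℕ) (x : ↥(I ^ (k + 1)) ⊗[R] M), ψ k x ∈ (I • ⊤ : Submodule R M) := by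
      intro k x
      rw [← hpow k]
      induction x with
      | zero => simp
      | tmul a m =>
        have : ψ k (a ⊗ₜ[R] m) = (a : R) • m := by simp [hψ]
        rw [this]
        exact Submodule.smul_mem_smul a.2 Submodule.mem_top
      | add x y hx hy => rw [map_add]; exact Submodule.add_mem _ hx hy
    have hsurj : ∀ (k : ℕ) (m : M), m ∈ (I • ⊤ : Submodule R M) →
        ∃ x : ↥(I ^ (k + 1)) ⊗[R] M, ψ k x = m := by
      intro k m hm
      rw [← hpow k] at hm
      refine Submodule.smul_induction_on hm ?_ ?_
      · intro r hr n _
        exact ⟨⟨r, hr⟩ ⊗ₜ[R] n, by simp [hψ]⟩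
      · rintro m₁ m₂ ⟨x₁, hx₁⟩ ⟨x₂, hx₂⟩
        exact ⟨x₁ + x₂, by rw [map_add, hx₁, hx₂]⟩
    -- injectivity of evaluation at 0 on the limit
    have hfaminj : ∀ x y : ∀ k : ℕ, ↥(I ^ (k + 1)) ⊗[R] M,
        x ∈ dualTransform R I M → y ∈ dualTransform R I M →
        ψ 0 (x 0) = ψ 0 (y 0) → x = y := by
      intro x y hx hy h0
      funext k
      have hxk : ψ k (x k) = ψ 0 (x 0) := by rw [← hx 0 k (Nat.zero_le k), hcomp]
      have hyk : ψ k (y k) = ψ 0 (y 0) := by rw [← hy 0 k (Nat.zero_le k), hcomp]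
      exact hinj k (by rw [hxk, hyk, h0])
    -- a section of ψ 0 landing in the limit
    have hsec : ∀ (m : M), m ∈ (I • ⊤ : Submodule R M) →
        ∃ z : ∀ k : ℕ, ↥(I ^ (k + 1)) ⊗[R] M,
          z ∈ dualTransform R I M ∧ ψ 0 (z 0) = m := by
      intro m hm
      refine ⟨fun k => (hsurj k m hm).choose, ?_, (hsurj 0 m hm).choose_spec⟩
      intro k l h
      apply hinj k
      rw [hcomp, (hsurj l m hm).choose_spec, (hsurj k m hm).choose_spec]
    -- every element of the limit lies in I • (limit)
    have hkey : ∀ x : ∀ k : ℕ, ↥(I ^ (k + 1)) ⊗[R] M, x ∈ dualTransform R I M →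
        x ∈ I • dualTransform R I M := by
      intro x hx
      have hm : ψ 0 (x 0) ∈ I • (I • ⊤ : Submodule R M) := by rw [hI2]; exact hmem 0 (x 0)
      have : ∃ z, z ∈ I • dualTransform R I M ∧ z ∈ dualTransform R I M ∧ ψ 0 (z 0) = ψ 0 (x 0) := by
        refine Submodule.smul_induction_on hm ?_ ?_
        · intro r hr n hn
          obtain ⟨z, hz, hz0⟩ := hsec n hn
          refine ⟨r • z, Submodule.smul_mem_smul hr hz, Submodule.smul_mem _ r hz, ?_⟩
          have : (r • z) 0 = r • z 0 := rfl
          rw [this, map_smul, hz0]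
        · rintro m₁ m₂ ⟨z₁, hz₁, hz₁', hz₁0⟩ ⟨z₂, hz₂, hz₂', hz₂0⟩
          refine ⟨z₁ + z₂, Submodule.add_mem _ hz₁ hz₂, Submodule.add_mem _ hz₁' hz₂', ?_⟩
          have : (z₁ + z₂) 0 = z₁ 0 + z₂ 0 := rfl
          rw [this, map_add, hz₁0, hz₂0]
      obtain ⟨z, hzI, hzD, hz0⟩ := this
      have := hfaminj x z hx hzD hz0.symm
      rw [this]
      exact hzI
    apply aux_subsing
    rw [eq_top_iff]
    intro x _
    rw [Submodule.mem_smul_top_iff]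
    exact hkey x.1 x.2
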